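/- Let X be a real Banach space and L : X →L[ℝ] X a bounded linear operator. Then there exists a constant C ≥ 0 such that for all τ ∈ [0, 1], ‖τ·φ₁(τ·L) − τ·exp((τ/2)·L) − (τ³/24)·(L ∘ L)‖ ≤ C·τ⁴. -/

import Mathlib

open MeasureTheory intervalIntegral
open scoped Nat

set_option maxHeartbeats 1000000
set_option synthInstance.maxHeartbeats 1000000

/-- The operator `φ_ℓ(T) = ∑_{k=0}^∞ T^k / (ℓ+k)!` (for `ℓ = 0` this is `exp T`). -/
noncomputable def phi {X : Type*} [NormedAddCommGroup X] [NormedSpace ℝ X] [CompleteSpace X]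
    (ℓ : ℕ) (T : X →L[ℝ] X) : X →L[ℝ] X :=
  ∑' k : ℕ, (((ℓ + k)! : ℝ)⁻¹) • T ^ k

theorem stmt12 {X : Type*} [NormedAddCommGroup X] [NormedSpace ℝ X] [CompleteSpace X]
    (L : X →L[ℝ] X) :
    ∃ C : ℝ, 0 ≤ C ∧ ∀ τ ∈ Set.Icc (0:ℝ) 1,
      ‖τ • phi 1 (τ • L) - τ • NormedSpace.exp ((τ/2) • L)
        - (τ^3/24) • L.comp L‖ ≤ C * τ^4 := by
  have hpow : ∀ (A : X →L[ℝ] X) (k : ℕ), ‖A ^ k‖ ≤ ‖A‖ ^ k := by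
    intro A k
    cases k with
    | zero => rw [pow_zero, pow_zero]; exact ContinuousLinearMap.norm_id_le
    | succ n => exact norm_pow_le' A n.succ_pos
  refine ⟨∑' k : ℕ, 2 * ‖L‖ ^ k / (k ! : ℝ),
    tsum_nonneg fun k => by positivity, ?_⟩
  intro τ hτ
  obtain ⟨hτ0, hτ1⟩ := hτ
  set d : ℕ → ℝ := fun k =>
    τ * (((1 + k)! : ℝ)⁻¹ * τ ^ k) - τ * ((k ! : ℝ)⁻¹ * (τ / 2) ^ k) with hd
  have hsumb : Summable (fun k : ℕ => 2 * ‖L‖ ^ k / (k ! : ℝ)) := by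
    have := Real.summable_pow_div_factorial ‖L‖
    simpa [mul_div_assoc] using this.mul_left 2
  have hsum1 : Summable (fun k : ℕ => (((1 + k)! : ℝ)⁻¹) • (τ • L) ^ k) := by
    apply Summable.of_norm_bounded (g := fun k : ℕ => ‖τ • L‖ ^ k / (k ! : ℝ))
      (Real.summable_pow_div_factorial _)
    intro k
    have hns := norm_smul ((((1 + k)! : ℝ))⁻¹) ((τ • L) ^ k)
    rw [hns, norm_inv, Real.norm_natCast, div_eq_inv_mul]
    have hfle : (k ! : ℝ) ≤ ((1 + k)! : ℝ) := by
      exact_mod_cast Nat.factorial_le (Nat.le_add_left k 1)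
    have hfpos : (0 : ℝ) < (k ! : ℝ) := by positivity
    have hinv : (((1 + k)! : ℝ))⁻¹ ≤ ((k ! : ℝ))⁻¹ := by
      apply inv_anti₀ hfpos hfle
    exact mul_le_mul hinv (hpow _ _) (norm_nonneg _) (by positivity)
  have h1 : HasSum (fun k : ℕ => (((1 + k)! : ℝ)⁻¹) • (τ • L) ^ k) (phi 1 (τ • L)) :=
    hsum1.hasSum
  have he1 : (fun k : ℕ => (τ * (((1 + k)! : ℝ)⁻¹ * τ ^ k)) • L ^ k)
      = fun k : ℕ => τ • ((((1 + k)! : ℝ)⁻¹) • (τ • L) ^ k) := by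
    funext k
    rw [smul_pow, smul_smul, smul_smul]
    congr 1
    ring
  have h1' : HasSum (fun k : ℕ => (τ * (((1 + k)! : ℝ)⁻¹ * τ ^ k)) • L ^ k)
      (τ • phi 1 (τ • L)) := by
    rw [he1]; exact h1.const_smul τ
  have h2 : HasSum (fun k : ℕ => ((k ! : ℝ)⁻¹) • ((τ / 2) • L) ^ k)
      (NormedSpace.exp ((τ / 2) • L)) := NormedSpace.exp_series_hasSum_exp' _
  have he2 : (fun k : ℕ => (τ * ((k ! : ℝ)⁻¹ * (τ / 2) ^ k)) • L ^ k)
      = fun k : ℕ => τ • (((k ! : ℝ)⁻¹) • ((τ / 2) • L) ^ k) := by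
    funext k
    rw [smul_pow, smul_smul, smul_smul]
    congr 1
    ring
  have h2' : HasSum (fun k : ℕ => (τ * ((k ! : ℝ)⁻¹ * (τ / 2) ^ k)) • L ^ k)
      (τ • NormedSpace.exp ((τ / 2) • L)) := by
    rw [he2]; exact h2.const_smul τ
  have h3 : HasSum (fun k : ℕ => d k • L ^ k)
      (τ • phi 1 (τ • L) - τ • NormedSpace.exp ((τ / 2) • L)) := by
    have heq : (fun k : ℕ => d k • L ^ k)
        = fun k : ℕ => (τ * (((1 + k)! : ℝ)⁻¹ * τ ^ k)) • L ^ k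
          - (τ * ((k ! : ℝ)⁻¹ * (τ / 2) ^ k)) • L ^ k := by
      funext k
      rw [hd, sub_smul]
    rw [heq]
    exact h1'.sub h2'
  have hd2 : d 2 = τ ^ 3 / 24 := by
    simp only [hd]
    norm_num [Nat.factorial]
    ring
  have hL2 : L.comp L = L ^ 2 := by rw [sq]; rfl
  have h4 : HasSum (fun k : ℕ => d k • L ^ k - if k = 2 then (τ ^ 3 / 24) • L.comp L else 0)
      (τ • phi 1 (τ • L) - τ • NormedSpace.exp ((τ / 2) • L)
        - (τ ^ 3 / 24) • L.comp L) := by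
    have h5 : HasSum (fun k : ℕ => if k = 2 then (τ ^ 3 / 24) • L.comp L else 0)
        ((τ ^ 3 / 24) • L.comp L) := hasSum_ite_eq 2 _
    exact h3.sub h5
  have hbound : ∀ k : ℕ,
      ‖d k • L ^ k - if k = 2 then (τ ^ 3 / 24) • L.comp L else 0‖
        ≤ 2 * ‖L‖ ^ k / (k ! : ℝ) * τ ^ 4 := by
    intro k
    match k with
    | 0 =>
      have hd0 : d 0 = 0 := by
        simp only [hd]
        norm_num [Nat.factorial]
      rw [hd0, if_neg (by norm_num : ¬ (0 : ℕ) = 2), zero_smul, sub_zero, norm_zero]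
      positivity
    | 1 =>
      have hd1 : d 1 = 0 := by
        simp only [hd]
        norm_num [Nat.factorial]
        ring
      rw [hd1, if_neg (by norm_num : ¬ (1 : ℕ) = 2), zero_smul, sub_zero, norm_zero]
      positivity
    | 2 =>
      rw [if_pos rfl, hd2, hL2, sub_self, norm_zero]
      positivity
    | (n + 3) =>
      rw [if_neg (by omega : ¬ n + 3 = 2), sub_zero]
      have hns := norm_smul (d (n + 3)) (L ^ (n + 3))
      rw [hns, Real.norm_eq_abs]
      have habs : |d (n + 3)| ≤ 2 * ((n + 3)! : ℝ)⁻¹ * τ ^ 4 := by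
        have hfle : ((n + 3)! : ℝ) ≤ ((1 + (n + 3))! : ℝ) := by
          exact_mod_cast Nat.factorial_le (Nat.le_add_left _ 1)
        have hfpos : (0 : ℝ) < ((n + 3)! : ℝ) := by positivity
        have h1le : (((1 + (n + 3))! : ℝ))⁻¹ ≤ ((n + 3)! : ℝ)⁻¹ := by
          apply inv_anti₀ hfpos hfle
        have h1pos : (0 : ℝ) ≤ (((1 + (n + 3))! : ℝ))⁻¹ := by positivity
        have hτ2 : (τ / 2) ^ (n + 3) ≤ τ ^ (n + 3) := by
          apply pow_le_pow_left₀ (by positivity)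
          linarith
        have hτ2' : (0:ℝ) ≤ (τ / 2) ^ (n + 3) := by positivity
        have hτpow : τ * τ ^ (n + 3) ≤ τ ^ 4 := by
          calc τ * τ ^ (n + 3) = τ ^ (n + 4) := by ring
          _ ≤ τ ^ 4 := pow_le_pow_of_le_one hτ0 hτ1 (by omega)
        have hτpow0 : (0:ℝ) ≤ τ * τ ^ (n + 3) := by positivity
        rw [abs_le]
        constructor
        · have key : τ * (((n + 3)! : ℝ)⁻¹ * (τ / 2) ^ (n + 3))
              ≤ ((n + 3)! : ℝ)⁻¹ * τ ^ 4 := by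
            calc τ * (((n + 3)! : ℝ)⁻¹ * (τ / 2) ^ (n + 3))
                ≤ τ * (((n + 3)! : ℝ)⁻¹ * τ ^ (n + 3)) := by gcongr
              _ = ((n + 3)! : ℝ)⁻¹ * (τ * τ ^ (n + 3)) := by ring
              _ ≤ ((n + 3)! : ℝ)⁻¹ * τ ^ 4 := by gcongr
          have e1 : 0 ≤ τ * (((1 + (n + 3))! : ℝ)⁻¹ * τ ^ (n + 3)) := by positivity
          simp only [hd]
          nlinarith [hfpos.le]
        · have key : τ * (((1 + (n + 3))! : ℝ)⁻¹ * τ ^ (n + 3))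
              ≤ ((n + 3)! : ℝ)⁻¹ * τ ^ 4 := by
            calc τ * (((1 + (n + 3))! : ℝ)⁻¹ * τ ^ (n + 3))
                ≤ τ * (((n + 3)! : ℝ)⁻¹ * τ ^ (n + 3)) := by gcongr
              _ = ((n + 3)! : ℝ)⁻¹ * (τ * τ ^ (n + 3)) := by ring
              _ ≤ ((n + 3)! : ℝ)⁻¹ * τ ^ 4 := by gcongr
          have e2 : 0 ≤ τ * (((n + 3)! : ℝ)⁻¹ * (τ / 2) ^ (n + 3)) := by positivity
          simp only [hd]
          nlinarith [hfpos.le]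
      calc |d (n + 3)| * ‖L ^ (n + 3)‖
          ≤ (2 * ((n + 3)! : ℝ)⁻¹ * τ ^ 4) * ‖L‖ ^ (n + 3) :=
            mul_le_mul habs (hpow _ _) (norm_nonneg _) (by positivity)
        _ = 2 * ‖L‖ ^ (n + 3) / ((n + 3)! : ℝ) * τ ^ 4 := by
            field_simp
  have hsumg : Summable (fun k : ℕ =>
      ‖d k • L ^ k - if k = 2 then (τ ^ 3 / 24) • L.comp L else 0‖) :=
    Summable.of_nonneg_of_le (fun k => norm_nonneg _) hbound (hsumb.mul_right _)
  rw [← h4.tsum_eq]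
  calc ‖∑' k : ℕ, (d k • L ^ k - if k = 2 then (τ ^ 3 / 24) • L.comp L else 0)‖
      ≤ ∑' k : ℕ, ‖d k • L ^ k - if k = 2 then (τ ^ 3 / 24) • L.comp L else 0‖ :=
        norm_tsum_le_tsum_norm hsumg
    _ ≤ ∑' k : ℕ, 2 * ‖L‖ ^ k / (k ! : ℝ) * τ ^ 4 :=
        Summable.tsum_le_tsum hbound hsumg (hsumb.mul_right _)
    _ = (∑' k : ℕ, 2 * ‖L‖ ^ k / (k ! : ℝ)) * τ ^ 4 := tsum_mul_right
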